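/- arXiv:1811.10528 — 3 statements merged into one kernel-verified Lean document; each statement's English description precedes it below -/
import Mathlib

section
/- The Fourier transform φ : Q(A) → End_{A-A}(A⊗A) intertwines the convolution product on Q(A) with composition: φ(x ∗ y) = φ(x) ∘ φ(y). -/
open CategoryTheory MonoidalCategory

universe v u

structure SeparableAlgebra (C : Type u) [Category.{v} C] [MonoidalCategory C] where
  X : C
  mul : X ⊗ X ⟶ X
  one : 𝟙_ C ⟶ X
  mul_assoc : (mul ▷ X) ≫ mul = (α_ X X X).hom ≫ (X ◁ mul) ≫ mul
  one_mul : (one ▷ X) ≫ mul = (λ_ X).hom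
  mul_one : (X ◁ one) ≫ mul = (ρ_ X).hom
  comul : X ⟶ X ⊗ X
  comul_mul : comul ≫ mul = 𝟙 X
  comul_left : mul ≫ comul = (X ◁ comul) ≫ (α_ X X X).inv ≫ (mul ▷ X)
  comul_right : mul ≫ comul = (comul ▷ X) ≫ (α_ X X X).hom ≫ (X ◁ mul)
  counit : X ⟶ 𝟙_ C
  counit_left : comul ≫ (counit ▷ X) ≫ (λ_ X).hom = 𝟙 X
  counit_right : comul ≫ (X ◁ counit) ≫ (ρ_ X).hom = 𝟙 X

namespace SeparableAlgebra

variable {C : Type u} [Category.{v} C] [MonoidalCategory C] (S : SeparableAlgebra C)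

/-- The categorical trace of an endomorphism of `A`, defined via the Frobenius structure. -/
def trace (f : S.X ⟶ S.X) : 𝟙_ C ⟶ 𝟙_ C :=
  S.one ≫ S.comul ≫ (f ▷ S.X) ≫ S.mul ≫ S.counit

/-- The convolution product on `C(A,A)`. -/
def conv (x y : S.X ⟶ S.X) : S.X ⟶ S.X := S.comul ≫ (x ⊗ₘ y) ≫ S.mul

/-- Commutativity of the algebra with respect to the braiding. -/
def IsCommutative [BraidedCategory C] : Prop := (β_ S.X S.X).hom ≫ S.mul = S.mul

/-- `f : A → A` is an algebra endomorphism. -/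
def IsAlgHom (f : S.X ⟶ S.X) : Prop :=
  S.mul ≫ f = (f ⊗ₘ f) ≫ S.mul ∧ S.one ≫ f = S.one

end SeparableAlgebra

namespace SeparableAlgebra

variable {C : Type u} [Category.{v} C] [MonoidalCategory C] (S : SeparableAlgebra C)

/-- The Fourier transform `φ(x) = (1 ⊗ m) ∘ (1 ⊗ x ⊗ 1) ∘ (Δ ⊗ 1)` on `A ⊗ A`. -/
def fourier (x : S.X ⟶ S.X) : S.X ⊗ S.X ⟶ S.X ⊗ S.X :=
  (S.comul ▷ S.X) ≫ (α_ S.X S.X S.X).hom ≫ (S.X ◁ (x ▷ S.X)) ≫ (S.X ◁ S.mul)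

/-- `f : A ⊗ A → A ⊗ A` is an `A`-bimodule endomorphism for the outer bimodule structure
on `A ⊗ A` (left action on the left factor, right action on the right factor). -/
def IsBimodHom (f : S.X ⊗ S.X ⟶ S.X ⊗ S.X) : Prop :=
  ((S.X ◁ f) ≫ (α_ S.X S.X S.X).inv ≫ (S.mul ▷ S.X)
      = (α_ S.X S.X S.X).inv ≫ (S.mul ▷ S.X) ≫ f) ∧
  ((f ▷ S.X) ≫ (α_ S.X S.X S.X).hom ≫ (S.X ◁ S.mul)
      = (α_ S.X S.X S.X).hom ≫ (S.X ◁ S.mul) ≫ f)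

end SeparableAlgebra


namespace SeparableAlgebra

variable {C : Type u} [Category.{v} C] [MonoidalCategory C] (S : SeparableAlgebra C)

lemma comul_eq_left' :
    S.comul = (λ_ S.X).inv ≫ ((S.one ≫ S.comul) ▷ S.X) ≫ (α_ S.X S.X S.X).hom ≫ (S.X ◁ S.mul) := by
  calc S.comul = (λ_ S.X).inv ≫ ((S.one ▷ S.X) ≫ S.mul) ≫ S.comul := by
        rw [S.one_mul]; simp
    _ = (λ_ S.X).inv ≫ (S.one ▷ S.X) ≫ (S.mul ≫ S.comul) := by simp
    _ = (λ_ S.X).inv ≫ (S.one ▷ S.X) ≫ (S.comul ▷ S.X) ≫ (α_ S.X S.X S.X).hom ≫ (S.X ◁ S.mul) := by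
        rw [S.comul_right]
    _ = _ := by rw [← comp_whiskerRight_assoc]

lemma coassoc' :
    S.comul ≫ (S.comul ▷ S.X) ≫ (α_ S.X S.X S.X).hom = S.comul ≫ (S.X ◁ S.comul) := by
  have hr : S.comul ≫ (S.X ◁ S.comul)
      = (λ_ S.X).inv ≫ ((S.one ≫ S.comul) ▷ S.X) ≫ (α_ S.X S.X S.X).hom
          ≫ (S.X ◁ ((S.X ◁ S.comul) ≫ (α_ S.X S.X S.X).inv ≫ (S.mul ▷ S.X))) := by
    calc S.comul ≫ (S.X ◁ S.comul)
        = ((λ_ S.X).inv ≫ ((S.one ≫ S.comul) ▷ S.X) ≫ (α_ S.X S.X S.X).hom ≫ (S.X ◁ S.mul))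
            ≫ (S.X ◁ S.comul) := by rw [← comul_eq_left' S]
      _ = (λ_ S.X).inv ≫ ((S.one ≫ S.comul) ▷ S.X) ≫ (α_ S.X S.X S.X).hom
            ≫ (S.X ◁ (S.mul ≫ S.comul)) := by simp
      _ = _ := by rw [S.comul_left]
  have hl : S.comul ≫ (S.comul ▷ S.X) ≫ (α_ S.X S.X S.X).hom
      = S.comul ≫ (((λ_ S.X).inv ≫ ((S.one ≫ S.comul) ▷ S.X) ≫ (α_ S.X S.X S.X).hom
          ≫ (S.X ◁ S.mul)) ▷ S.X) ≫ (α_ S.X S.X S.X).hom := by rw [← comul_eq_left' S]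
  rw [hl, hr]
  simp only [comp_whiskerRight, MonoidalCategory.whiskerLeft_comp, Category.assoc]
  rw [show ((λ_ S.X).inv ▷ S.X : S.X ⊗ S.X ⟶ (𝟙_ C ⊗ S.X) ⊗ S.X)
      = (λ_ (S.X ⊗ S.X)).inv ≫ (α_ (𝟙_ C) S.X S.X).inv from by monoidal]
  simp only [Category.assoc]
  rw [leftUnitor_inv_naturality_assoc]
  rw [← associator_inv_naturality_left_assoc, whisker_exchange_assoc,
    ← associator_inv_naturality_left_assoc, whisker_exchange_assoc]
  monoidal

end SeparableAlgebra

/-- The Fourier transform intertwines the convolution product with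
composition: `φ(x ∗ y) = φ(x) ∘ φ(y)`. -/
theorem fourier_conv {C : Type u} [Category.{v} C] [MonoidalCategory C]
    [BraidedCategory C] (S : SeparableAlgebra C) :
    ∀ x y : S.X ⟶ S.X, S.fourier (S.conv x y) = S.fourier y ≫ S.fourier x := by
  intro x y
  calc S.fourier (S.conv x y)
      = (S.comul ▷ S.X) ≫ (α_ S.X S.X S.X).hom
          ≫ (S.X ◁ (((S.comul ≫ (x ▷ S.X) ≫ (S.X ◁ y)) ▷ S.X)
              ≫ ((S.mul ▷ S.X) ≫ S.mul))) := by
        rw [SeparableAlgebra.fourier, SeparableAlgebra.conv, MonoidalCategory.tensorHom_def]; simp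
    _ = (S.comul ▷ S.X) ≫ (α_ S.X S.X S.X).hom
          ≫ (S.X ◁ (((S.comul ≫ (x ▷ S.X) ≫ (S.X ◁ y)) ▷ S.X)
              ≫ ((α_ S.X S.X S.X).hom ≫ (S.X ◁ S.mul) ≫ S.mul))) := by
        rw [S.mul_assoc]
    _ = ((S.comul ≫ (S.X ◁ S.comul)) ▷ S.X) ≫ (α_ S.X (S.X ⊗ S.X) S.X).hom
          ≫ (S.X ◁ ((α_ S.X S.X S.X).hom ≫ (x ▷ (S.X ⊗ S.X)) ≫ (S.X ◁ (y ▷ S.X))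
              ≫ (S.X ◁ S.mul) ≫ S.mul)) := by
        monoidal
    _ = ((S.comul ≫ (S.comul ▷ S.X) ≫ (α_ S.X S.X S.X).hom) ▷ S.X) ≫ (α_ S.X (S.X ⊗ S.X) S.X).hom
          ≫ (S.X ◁ ((α_ S.X S.X S.X).hom ≫ (x ▷ (S.X ⊗ S.X)) ≫ (S.X ◁ (y ▷ S.X))
              ≫ (S.X ◁ S.mul) ≫ S.mul)) := by
        rw [SeparableAlgebra.coassoc']
    _ = ((S.comul ▷ S.X) ≫ (α_ S.X S.X S.X).hom ≫ (S.X ◁ (y ▷ S.X)) ≫ (S.X ◁ S.mul))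
          ≫ ((S.comul ▷ S.X) ≫ (α_ S.X S.X S.X).hom ≫ (S.X ◁ (x ▷ S.X)) ≫ (S.X ◁ S.mul)) := by
        conv_rhs => rw [Category.assoc, Category.assoc, Category.assoc]
        rw [whisker_exchange_assoc, whisker_exchange_assoc,
          associator_naturality_right_assoc, associator_naturality_right_assoc]
        conv_rhs => rw [← MonoidalCategory.whiskerLeft_comp_assoc,
          ← MonoidalCategory.whiskerLeft_comp_assoc]
        simp only [Category.assoc]
        rw [whisker_exchange, whisker_exchange_assoc]
        monoidal
    _ = S.fourier y ≫ S.fourier x := by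
        rw [SeparableAlgebra.fourier, SeparableAlgebra.fourier]
end

section
/- If A is a commutative separable algebra in a braided tensor category C, then the convolution algebra Q(A) is commutative: x ∗ y = y ∗ x for all x, y ∈ C(A,A). -/
open CategoryTheory MonoidalCategory

universe v u

namespace SeparableAlgebra

variable {C : Type u} [Category.{v} C] [MonoidalCategory C] (S : SeparableAlgebra C)

/-- The copairing `δ = η ≫ Δ` of the Frobenius structure. -/
def cop : 𝟙_ C ⟶ S.X ⊗ S.X := S.one ≫ S.comul

/-- The pairing `p = m ≫ ε` of the Frobenius structure. -/
def pr : S.X ⊗ S.X ⟶ 𝟙_ C := S.mul ≫ S.counit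

lemma formA :
    S.comul = (ρ_ S.X).inv ≫ (S.X ◁ S.cop) ≫ (α_ S.X S.X S.X).inv ≫ (S.mul ▷ S.X) := by
  have h0 : (ρ_ S.X).inv ≫ (S.X ◁ S.one) ≫ S.mul = 𝟙 S.X := by
    rw [S.mul_one]; simp
  calc S.comul = ((ρ_ S.X).inv ≫ (S.X ◁ S.one) ≫ S.mul) ≫ S.comul := by
        rw [h0, Category.id_comp]
    _ = (ρ_ S.X).inv ≫ (S.X ◁ S.one) ≫ (S.X ◁ S.comul) ≫ (α_ S.X S.X S.X).inv ≫
        (S.mul ▷ S.X) := by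
        simp only [Category.assoc, S.comul_left]
    _ = _ := by
        rw [← MonoidalCategory.whiskerLeft_comp_assoc]; rfl

lemma formB :
    S.comul = (λ_ S.X).inv ≫ (S.cop ▷ S.X) ≫ (α_ S.X S.X S.X).hom ≫ (S.X ◁ S.mul) := by
  have h0 : (λ_ S.X).inv ≫ (S.one ▷ S.X) ≫ S.mul = 𝟙 S.X := by
    rw [S.one_mul]; simp
  calc S.comul = ((λ_ S.X).inv ≫ (S.one ▷ S.X) ≫ S.mul) ≫ S.comul := by
        rw [h0, Category.id_comp]
    _ = (λ_ S.X).inv ≫ (S.one ▷ S.X) ≫ (S.comul ▷ S.X) ≫ (α_ S.X S.X S.X).hom ≫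
        (S.X ◁ S.mul) := by
        simp only [Category.assoc, S.comul_right]
    _ = _ := by
        rw [← MonoidalCategory.comp_whiskerRight_assoc]; rfl

lemma snake1 :
    (S.X ◁ S.cop) ≫ (α_ S.X S.X S.X).inv ≫ (S.pr ▷ S.X) =
      (ρ_ S.X).hom ≫ (λ_ S.X).inv := by
  have hA : (S.X ◁ S.cop) ≫ (α_ S.X S.X S.X).inv ≫ (S.mul ▷ S.X) = (ρ_ S.X).hom ≫ S.comul := by
    rw [S.formA]; simp
  have hc : S.comul ≫ (S.counit ▷ S.X) = (λ_ S.X).inv := by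
    have := S.counit_left
    rw [← Category.assoc] at this
    rw [← Category.comp_id (S.comul ≫ S.counit ▷ S.X), ← (λ_ S.X).hom_inv_id,
      ← Category.assoc, this, Category.id_comp]
  show (S.X ◁ S.cop) ≫ (α_ S.X S.X S.X).inv ≫ ((S.mul ≫ S.counit) ▷ S.X) = _
  rw [MonoidalCategory.comp_whiskerRight, ← Category.assoc, ← Category.assoc]
  rw [Category.assoc (S.X ◁ S.cop), hA, Category.assoc, hc]

lemma snake2 :
    (S.cop ▷ S.X) ≫ (α_ S.X S.X S.X).hom ≫ (S.X ◁ S.pr) =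
      (λ_ S.X).hom ≫ (ρ_ S.X).inv := by
  have hB : (S.cop ▷ S.X) ≫ (α_ S.X S.X S.X).hom ≫ (S.X ◁ S.mul) = (λ_ S.X).hom ≫ S.comul := by
    rw [S.formB]; simp
  have hc : S.comul ≫ (S.X ◁ S.counit) = (ρ_ S.X).inv := by
    have := S.counit_right
    rw [← Category.assoc] at this
    rw [← Category.comp_id (S.comul ≫ S.X ◁ S.counit), ← (ρ_ S.X).hom_inv_id,
      ← Category.assoc, this, Category.id_comp]
  show (S.cop ▷ S.X) ≫ (α_ S.X S.X S.X).hom ≫ (S.X ◁ (S.mul ≫ S.counit)) = _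
  rw [MonoidalCategory.whiskerLeft_comp, ← Category.assoc, ← Category.assoc]
  rw [Category.assoc (S.cop ▷ S.X), hB, Category.assoc, hc]

variable [BraidedCategory C]

lemma pr_braiding (hcomm : S.IsCommutative) : (β_ S.X S.X).hom ≫ S.pr = S.pr := by
  have h : (β_ S.X S.X).hom ≫ S.mul = S.mul := hcomm
  show (β_ S.X S.X).hom ≫ S.mul ≫ S.counit = S.mul ≫ S.counit
  rw [← Category.assoc, h]

lemma cop_braiding (hcomm : S.IsCommutative) : S.cop ≫ (β_ S.X S.X).hom = S.cop := by
  letI Pd : ExactPairing S.X S.X :=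
    ⟨S.cop, S.pr, S.snake1, S.snake2⟩
  have h2' : (S.cop ≫ (β_ S.X S.X).inv) ▷ S.X ≫ (α_ S.X S.X S.X).hom ≫
      S.X ◁ ((β_ S.X S.X).hom ≫ S.pr) = (λ_ S.X).hom ≫ (ρ_ S.X).inv :=
    (BraidedCategory.exactPairing_swap S.X S.X).evaluation_coevaluation'
  rw [S.pr_braiding hcomm] at h2'
  have e1 : (tensorRightHomEquiv (𝟙_ C) S.X S.X S.X).symm (S.cop ≫ (β_ S.X S.X).inv) =
      (λ_ S.X).hom := by
    show (S.cop ≫ (β_ S.X S.X).inv) ▷ S.X ≫ (α_ S.X S.X S.X).hom ≫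
        S.X ◁ S.pr ≫ (ρ_ S.X).hom = (λ_ S.X).hom
    rw [reassoc_of% h2']
    simp
  have e2 : (tensorRightHomEquiv (𝟙_ C) S.X S.X S.X).symm S.cop = (λ_ S.X).hom := by
    show S.cop ▷ S.X ≫ (α_ S.X S.X S.X).hom ≫ S.X ◁ S.pr ≫ (ρ_ S.X).hom = (λ_ S.X).hom
    rw [reassoc_of% S.snake2]
    simp
  have h := (tensorRightHomEquiv (𝟙_ C) S.X S.X S.X).symm.injective (e1.trans e2.symm)
  calc S.cop ≫ (β_ S.X S.X).hom = (S.cop ≫ (β_ S.X S.X).inv) ≫ (β_ S.X S.X).hom := by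
        rw [h]
    _ = S.cop := by rw [Category.assoc, Iso.inv_hom_id, Category.comp_id]

lemma comul_braiding (hcomm : S.IsCommutative) :
    S.comul ≫ (β_ S.X S.X).hom = S.comul := by
  have hm : (β_ S.X S.X).hom ≫ S.mul = S.mul := hcomm
  calc S.comul ≫ (β_ S.X S.X).hom
      = (λ_ S.X).inv ≫ (S.cop ▷ S.X) ≫ (α_ S.X S.X S.X).hom ≫ (S.X ◁ S.mul) ≫
        (β_ S.X S.X).hom := by rw [S.formB]; simp only [Category.assoc]
    _ = (λ_ S.X).inv ≫ (S.cop ▷ S.X) ≫ (α_ S.X S.X S.X).hom ≫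
        (β_ S.X (S.X ⊗ S.X)).hom ≫ (S.mul ▷ S.X) := by
        rw [BraidedCategory.braiding_naturality_right]
    _ = (λ_ S.X).inv ≫ ((S.cop ≫ (β_ S.X S.X).hom) ▷ S.X) ≫ (α_ S.X S.X S.X).hom ≫
        (S.X ◁ (β_ S.X S.X).hom) ≫ (α_ S.X S.X S.X).inv ≫ (S.mul ▷ S.X) := by
        rw [BraidedCategory.braiding_tensor_right_hom]
        simp only [MonoidalCategory.comp_whiskerRight, Category.assoc,
          Iso.hom_inv_id_assoc]
    _ = (λ_ S.X).inv ≫ (S.cop ▷ S.X) ≫ (α_ S.X S.X S.X).hom ≫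
        (S.X ◁ (β_ S.X S.X).hom) ≫ (α_ S.X S.X S.X).inv ≫ (S.mul ▷ S.X) := by
        rw [S.cop_braiding hcomm]
    _ = (λ_ S.X).inv ≫ (S.cop ▷ S.X) ≫ (α_ S.X S.X S.X).hom ≫
        (S.X ◁ (β_ S.X S.X).hom) ≫ (α_ S.X S.X S.X).inv ≫ ((β_ S.X S.X).hom ▷ S.X) ≫
        (S.mul ▷ S.X) := by
        conv_lhs => rw [← hm]
        rw [MonoidalCategory.comp_whiskerRight]
    _ = (λ_ S.X).inv ≫ (S.cop ▷ S.X) ≫ (β_ (S.X ⊗ S.X) S.X).hom ≫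
        (α_ S.X S.X S.X).inv ≫ (S.mul ▷ S.X) := by
        rw [BraidedCategory.braiding_tensor_left_hom]
        simp only [Category.assoc, Iso.hom_inv_id_assoc]
    _ = (λ_ S.X).inv ≫ (β_ (𝟙_ C) S.X).hom ≫ (S.X ◁ S.cop) ≫
        (α_ S.X S.X S.X).inv ≫ (S.mul ▷ S.X) := by
        rw [BraidedCategory.braiding_naturality_left_assoc]
    _ = (ρ_ S.X).inv ≫ (S.X ◁ S.cop) ≫ (α_ S.X S.X S.X).inv ≫ (S.mul ▷ S.X) := by
        rw [braiding_tensorUnit_left]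
        simp
    _ = S.comul := S.formA.symm

end SeparableAlgebra

/-- If `A` is a commutative separable algebra in a braided tensor category,
then the convolution algebra `Q(A)` is commutative. -/
theorem conv_comm {C : Type u} [Category.{v} C] [MonoidalCategory C]
    [BraidedCategory C] (S : SeparableAlgebra C)
    (hcomm : S.IsCommutative) :
    ∀ x y : S.X ⟶ S.X, S.conv x y = S.conv y x := by
  intro x y
  have hm : (β_ S.X S.X).hom ≫ S.mul = S.mul := hcomm
  show S.comul ≫ (x ⊗ₘ y) ≫ S.mul = S.comul ≫ (y ⊗ₘ x) ≫ S.mul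
  calc S.comul ≫ (x ⊗ₘ y) ≫ S.mul
      = S.comul ≫ (x ⊗ₘ y) ≫ (β_ S.X S.X).hom ≫ S.mul := by rw [hm]
    _ = S.comul ≫ (β_ S.X S.X).hom ≫ (y ⊗ₘ x) ≫ S.mul := by
        rw [BraidedCategory.braiding_naturality_assoc]
    _ = (S.comul ≫ (β_ S.X S.X).hom) ≫ (y ⊗ₘ x) ≫ S.mul := by
        rw [Category.assoc]
    _ = S.comul ≫ (y ⊗ₘ x) ≫ S.mul := by rw [S.comul_braiding hcomm]
end

section
/- The assignment g ↦ χ_g, sending an algebra automorphism g of an étale algebra A to the character χ_g(x) = tr_A(g ∘ x)·d(A)^{-1} of the convolution algebra, is injective on Aut_alg(A), and distinct automorphisms correspond to orthogonal minimal idempotents of Q(A): g ∗ h = 0 when g ≠ h are automorphisms with g∗h computed in convolution, unless g = h in which case g ∗ g = g. -/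
open CategoryTheory MonoidalCategory

universe v u

namespace AutOrthAux

open SeparableAlgebra

variable {C : Type u} [Category.{v} C] [MonoidalCategory C] (S : SeparableAlgebra C)

/-- `E x := Δ ≫ (x ▷ X) ≫ m` is a right module map for every `x`. -/
lemma mod (x : S.X ⟶ S.X) :
    S.mul ≫ (S.comul ≫ x ▷ S.X ≫ S.mul) =
      (S.comul ≫ x ▷ S.X ≫ S.mul) ▷ S.X ≫ S.mul := by
  calc S.mul ≫ (S.comul ≫ x ▷ S.X ≫ S.mul)
      = (S.mul ≫ S.comul) ≫ x ▷ S.X ≫ S.mul := by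
        simp only [Category.assoc]
    _ = S.comul ▷ S.X ≫ (α_ _ _ _).hom ≫ (S.X ◁ S.mul ≫ x ▷ S.X) ≫ S.mul := by
        rw [S.comul_right]; simp only [Category.assoc]
    _ = S.comul ▷ S.X ≫ (α_ _ _ _).hom ≫ (x ▷ (S.X ⊗ S.X) ≫ S.X ◁ S.mul) ≫ S.mul := by
        rw [whisker_exchange]
    _ = S.comul ▷ S.X ≫ ((α_ _ _ _).hom ≫ x ▷ (S.X ⊗ S.X)) ≫ S.X ◁ S.mul ≫ S.mul := by
        simp only [Category.assoc]
    _ = S.comul ▷ S.X ≫ (x ▷ S.X ▷ S.X ≫ (α_ _ _ _).hom) ≫ S.X ◁ S.mul ≫ S.mul := by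
        rw [associator_naturality_left]
    _ = S.comul ▷ S.X ≫ x ▷ S.X ▷ S.X ≫ ((α_ _ _ _).hom ≫ S.X ◁ S.mul ≫ S.mul) := by
        simp only [Category.assoc]
    _ = S.comul ▷ S.X ≫ x ▷ S.X ▷ S.X ≫ S.mul ▷ S.X ≫ S.mul := by
        rw [← S.mul_assoc]
    _ = (S.comul ≫ x ▷ S.X ≫ S.mul) ▷ S.X ≫ S.mul := by
        simp only [comp_whiskerRight, Category.assoc]

/-- Any right module map is determined by its point `one ≫ z`. -/
lemma rep {z : S.X ⟶ S.X} (hz : S.mul ≫ z = z ▷ S.X ≫ S.mul) :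
    z = (λ_ S.X).inv ≫ (S.one ≫ z) ▷ S.X ≫ S.mul := by
  calc z = (λ_ S.X).inv ≫ (S.one ▷ S.X ≫ S.mul) ≫ z := by
        rw [S.one_mul]; simp
    _ = (λ_ S.X).inv ≫ S.one ▷ S.X ≫ S.mul ≫ z := by
        simp only [Category.assoc]
    _ = (λ_ S.X).inv ≫ S.one ▷ S.X ≫ z ▷ S.X ≫ S.mul := by rw [hz]
    _ = (λ_ S.X).inv ≫ (S.one ≫ z) ▷ S.X ≫ S.mul := by
        simp only [comp_whiskerRight, Category.assoc]

/-- Twisted module property for `E v := Δ ≫ (v ▷ X) ≫ m` when `v` is an algebra map. -/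
lemma algmod {v : S.X ⟶ S.X} (hv1 : S.mul ≫ v = (v ⊗ₘ v) ≫ S.mul) :
    S.mul ≫ (S.comul ≫ v ▷ S.X ≫ S.mul) =
      v ▷ S.X ≫ S.X ◁ (S.comul ≫ v ▷ S.X ≫ S.mul) ≫ S.mul := by
  calc S.mul ≫ (S.comul ≫ v ▷ S.X ≫ S.mul)
      = (S.mul ≫ S.comul) ≫ v ▷ S.X ≫ S.mul := by simp only [Category.assoc]
    _ = S.X ◁ S.comul ≫ (α_ _ _ _).inv ≫ (S.mul ▷ S.X ≫ v ▷ S.X) ≫ S.mul := by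
        rw [S.comul_left]; simp only [Category.assoc]
    _ = S.X ◁ S.comul ≫ (α_ _ _ _).inv ≫ (S.mul ≫ v) ▷ S.X ≫ S.mul := by
        rw [comp_whiskerRight]
    _ = S.X ◁ S.comul ≫ (α_ _ _ _).inv ≫ ((v ⊗ₘ v) ≫ S.mul) ▷ S.X ≫ S.mul := by rw [hv1]
    _ = S.X ◁ S.comul ≫ (α_ _ _ _).inv ≫ (v ⊗ₘ v) ▷ S.X ≫ S.mul ▷ S.X ≫ S.mul := by
        rw [comp_whiskerRight]; simp only [Category.assoc]
    _ = S.X ◁ S.comul ≫ (α_ _ _ _).inv ≫ (v ⊗ₘ v) ▷ S.X ≫ (α_ _ _ _).hom ≫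
          S.X ◁ S.mul ≫ S.mul := by rw [S.mul_assoc]
    _ = S.X ◁ S.comul ≫ (α_ _ _ _).inv ≫ v ▷ S.X ▷ S.X ≫ (S.X ◁ v) ▷ S.X ≫ (α_ _ _ _).hom ≫
          S.X ◁ S.mul ≫ S.mul := by
        rw [MonoidalCategory.tensorHom_def v v, comp_whiskerRight]; simp only [Category.assoc]
    _ = S.X ◁ S.comul ≫ (α_ _ _ _).inv ≫ v ▷ S.X ▷ S.X ≫ (α_ _ _ _).hom ≫ S.X ◁ (v ▷ S.X) ≫
          S.X ◁ S.mul ≫ S.mul := by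
        rw [associator_naturality_middle_assoc]
    _ = S.X ◁ S.comul ≫ (v ▷ (S.X ⊗ S.X) ≫ (α_ _ _ _).inv) ≫ (α_ _ _ _).hom ≫ S.X ◁ (v ▷ S.X) ≫
          S.X ◁ S.mul ≫ S.mul := by
        rw [associator_inv_naturality_left]; simp only [Category.assoc]
    _ = (S.X ◁ S.comul ≫ v ▷ (S.X ⊗ S.X)) ≫ S.X ◁ (v ▷ S.X) ≫ S.X ◁ S.mul ≫ S.mul := by
        simp only [Category.assoc, Iso.inv_hom_id_assoc]
    _ = (v ▷ S.X ≫ S.X ◁ S.comul) ≫ S.X ◁ (v ▷ S.X) ≫ S.X ◁ S.mul ≫ S.mul := by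
        rw [← whisker_exchange]
    _ = v ▷ S.X ≫ S.X ◁ (S.comul ≫ v ▷ S.X ≫ S.mul) ≫ S.mul := by
        simp only [MonoidalCategory.whiskerLeft_comp, Category.assoc]

/-- `E v = v ≫ (right multiplication by the point of `E v`)`. -/
lemma vconj {v : S.X ⟶ S.X} (hv1 : S.mul ≫ v = (v ⊗ₘ v) ≫ S.mul) :
    S.comul ≫ v ▷ S.X ≫ S.mul =
      v ≫ ((ρ_ S.X).inv ≫ S.X ◁ (S.one ≫ (S.comul ≫ v ▷ S.X ≫ S.mul)) ≫ S.mul) := by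
  calc S.comul ≫ v ▷ S.X ≫ S.mul
      = (ρ_ S.X).inv ≫ (S.X ◁ S.one ≫ S.mul) ≫ (S.comul ≫ v ▷ S.X ≫ S.mul) := by
        rw [S.mul_one]; simp
    _ = (ρ_ S.X).inv ≫ S.X ◁ S.one ≫ S.mul ≫ (S.comul ≫ v ▷ S.X ≫ S.mul) := by
        simp only [Category.assoc]
    _ = (ρ_ S.X).inv ≫ S.X ◁ S.one ≫ v ▷ S.X ≫ S.X ◁ (S.comul ≫ v ▷ S.X ≫ S.mul) ≫ S.mul := by
        rw [algmod S hv1]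
    _ = (ρ_ S.X).inv ≫ v ▷ (𝟙_ C) ≫ S.X ◁ S.one ≫ S.X ◁ (S.comul ≫ v ▷ S.X ≫ S.mul) ≫
          S.mul := by
        rw [whisker_exchange_assoc v S.one]
    _ = v ≫ (ρ_ S.X).inv ≫ S.X ◁ S.one ≫ S.X ◁ (S.comul ≫ v ▷ S.X ≫ S.mul) ≫ S.mul := by
        rw [← rightUnitor_inv_naturality_assoc]
    _ = v ≫ ((ρ_ S.X).inv ≫ S.X ◁ (S.one ≫ (S.comul ≫ v ▷ S.X ≫ S.mul)) ≫ S.mul) := by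
        simp only [MonoidalCategory.whiskerLeft_comp, Category.assoc]

/-- With commutativity, right multiplication by a point equals left multiplication. -/
lemma MN [BraidedCategory C] (hcomm : S.IsCommutative) (q : 𝟙_ C ⟶ S.X) :
    (ρ_ S.X).inv ≫ S.X ◁ q ≫ S.mul = (λ_ S.X).inv ≫ q ▷ S.X ≫ S.mul := by
  calc (ρ_ S.X).inv ≫ S.X ◁ q ≫ S.mul
      = (ρ_ S.X).inv ≫ S.X ◁ q ≫ (β_ S.X S.X).hom ≫ S.mul := by rw [hcomm]
    _ = (ρ_ S.X).inv ≫ (β_ S.X (𝟙_ C)).hom ≫ q ▷ S.X ≫ S.mul := by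
        rw [BraidedCategory.braiding_naturality_right_assoc]
    _ = (λ_ S.X).inv ≫ q ▷ S.X ≫ S.mul := by
        rw [← Category.assoc, rightUnitor_inv_braiding]

/-- Comodule property of right multiplication maps. -/
lemma comodL (q : 𝟙_ C ⟶ S.X) :
    ((ρ_ S.X).inv ≫ S.X ◁ q ≫ S.mul) ≫ S.comul =
      S.comul ≫ S.X ◁ ((ρ_ S.X).inv ≫ S.X ◁ q ≫ S.mul) := by
  calc ((ρ_ S.X).inv ≫ S.X ◁ q ≫ S.mul) ≫ S.comul
      = (ρ_ S.X).inv ≫ S.X ◁ q ≫ (S.mul ≫ S.comul) := by simp only [Category.assoc]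
    _ = (ρ_ S.X).inv ≫ (S.X ◁ q ≫ S.comul ▷ S.X) ≫ (α_ _ _ _).hom ≫ S.X ◁ S.mul := by
        rw [S.comul_right]; simp only [Category.assoc]
    _ = (ρ_ S.X).inv ≫ S.comul ▷ (𝟙_ C) ≫ ((S.X ⊗ S.X) ◁ q ≫ (α_ _ _ _).hom) ≫
          S.X ◁ S.mul := by
        rw [whisker_exchange S.comul q]; simp only [Category.assoc]
    _ = (ρ_ S.X).inv ≫ S.comul ▷ (𝟙_ C) ≫ (α_ _ _ _).hom ≫ S.X ◁ (S.X ◁ q) ≫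
          S.X ◁ S.mul := by
        rw [associator_naturality_right]; simp only [Category.assoc]
    _ = S.comul ≫ (ρ_ (S.X ⊗ S.X)).inv ≫ (α_ _ _ _).hom ≫ S.X ◁ (S.X ◁ q) ≫
          S.X ◁ S.mul := by
        rw [rightUnitor_inv_naturality_assoc]
    _ = S.comul ≫ S.X ◁ (ρ_ S.X).inv ≫ S.X ◁ (S.X ◁ q) ≫ S.X ◁ S.mul := by
        rw [rightUnitor_tensor_inv]; simp only [Category.assoc, Iso.inv_hom_id_assoc]
    _ = S.comul ≫ S.X ◁ ((ρ_ S.X).inv ≫ S.X ◁ q ≫ S.mul) := by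
        simp only [MonoidalCategory.whiskerLeft_comp, Category.assoc]

/-- The Frobenius "snake" identity. -/
lemma snakeB :
    (ρ_ S.X).inv ≫ S.X ◁ (S.one ≫ S.comul) ≫ (α_ S.X S.X S.X).inv ≫
      S.mul ▷ S.X ≫ S.counit ▷ S.X ≫ (λ_ S.X).hom = 𝟙 S.X := by
  calc (ρ_ S.X).inv ≫ S.X ◁ (S.one ≫ S.comul) ≫ (α_ S.X S.X S.X).inv ≫
      S.mul ▷ S.X ≫ S.counit ▷ S.X ≫ (λ_ S.X).hom
      = (ρ_ S.X).inv ≫ S.X ◁ S.one ≫ (S.X ◁ S.comul ≫ (α_ S.X S.X S.X).inv ≫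
          S.mul ▷ S.X) ≫ S.counit ▷ S.X ≫ (λ_ S.X).hom := by
        simp only [MonoidalCategory.whiskerLeft_comp, Category.assoc]
    _ = (ρ_ S.X).inv ≫ S.X ◁ S.one ≫ (S.mul ≫ S.comul) ≫ S.counit ▷ S.X ≫ (λ_ S.X).hom := by
        rw [← S.comul_left]
    _ = (ρ_ S.X).inv ≫ (S.X ◁ S.one ≫ S.mul) ≫ S.comul ≫ S.counit ▷ S.X ≫ (λ_ S.X).hom := by
        simp only [Category.assoc]
    _ = S.comul ≫ S.counit ▷ S.X ≫ (λ_ S.X).hom := by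
        rw [S.mul_one]; simp
    _ = 𝟙 S.X := S.counit_left

/-- Reconstruction of an endomorphism from its "name". -/
lemma R2 (z : S.X ⟶ S.X) :
    z = (ρ_ S.X).inv ≫ S.X ◁ ((S.one ≫ S.comul) ≫ S.X ◁ z) ≫ (α_ S.X S.X S.X).inv ≫
      S.mul ▷ S.X ≫ S.counit ▷ S.X ≫ (λ_ S.X).hom := by
  calc z
      = ((ρ_ S.X).inv ≫ S.X ◁ (S.one ≫ S.comul) ≫ (α_ S.X S.X S.X).inv ≫
          S.mul ▷ S.X ≫ S.counit ▷ S.X ≫ (λ_ S.X).hom) ≫ z := by rw [snakeB]; simp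
    _ = (ρ_ S.X).inv ≫ S.X ◁ (S.one ≫ S.comul) ≫ (α_ S.X S.X S.X).inv ≫
          S.mul ▷ S.X ≫ S.counit ▷ S.X ≫ (λ_ S.X).hom ≫ z := by
        simp only [Category.assoc]
    _ = (ρ_ S.X).inv ≫ S.X ◁ (S.one ≫ S.comul) ≫ (α_ S.X S.X S.X).inv ≫
          S.mul ▷ S.X ≫ S.counit ▷ S.X ≫ (𝟙_ C) ◁ z ≫ (λ_ S.X).hom := by
        rw [leftUnitor_naturality]
    _ = (ρ_ S.X).inv ≫ S.X ◁ (S.one ≫ S.comul) ≫ (α_ S.X S.X S.X).inv ≫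
          S.mul ▷ S.X ≫ S.X ◁ z ≫ S.counit ▷ S.X ≫ (λ_ S.X).hom := by
        rw [← whisker_exchange_assoc S.counit z]
    _ = (ρ_ S.X).inv ≫ S.X ◁ (S.one ≫ S.comul) ≫ (α_ S.X S.X S.X).inv ≫
          (S.X ⊗ S.X) ◁ z ≫ S.mul ▷ S.X ≫ S.counit ▷ S.X ≫ (λ_ S.X).hom := by
        rw [← whisker_exchange_assoc S.mul z]
    _ = (ρ_ S.X).inv ≫ S.X ◁ (S.one ≫ S.comul) ≫ S.X ◁ (S.X ◁ z) ≫ (α_ S.X S.X S.X).inv ≫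
          S.mul ▷ S.X ≫ S.counit ▷ S.X ≫ (λ_ S.X).hom := by
        rw [associator_inv_naturality_right_assoc]
    _ = (ρ_ S.X).inv ≫ S.X ◁ ((S.one ≫ S.comul) ≫ S.X ◁ z) ≫ (α_ S.X S.X S.X).inv ≫
          S.mul ▷ S.X ≫ S.counit ▷ S.X ≫ (λ_ S.X).hom := by
        simp only [MonoidalCategory.whiskerLeft_comp, Category.assoc]

section Main

variable {k : Type*} [Field k] [BraidedCategory C] [Preadditive C] [CategoryTheory.Linear k C]

/-- Key lemma: if `v ≠ 𝟙` is an algebra endomorphism of a connected étale algebra, then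
`Δ ≫ (v ▷ X) ≫ m = 0`. -/
lemma main (hcomm : S.IsCommutative)
    (hconn : ∀ f : 𝟙_ C ⟶ S.X, ∃ c : k, f = c • S.one)
    (hsimple : ∀ u : 𝟙_ C ⟶ 𝟙_ C, ∃! c : k, u = c • 𝟙 (𝟙_ C))
    (d : k) (hd : S.one ≫ S.counit = d • 𝟙 (𝟙_ C)) (hd0 : d ≠ 0)
    (v : S.X ⟶ S.X) (hv : S.IsAlgHom v) (hvne : v ≠ 𝟙 S.X) :
    S.comul ≫ v ▷ S.X ≫ S.mul = 0 := by
  have cancel : ∀ a b : k, a • 𝟙 (𝟙_ C) = b • 𝟙 (𝟙_ C) → a = b := by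
    intro a b hab
    obtain ⟨c0, -, huniq⟩ := hsimple (a • 𝟙 (𝟙_ C))
    exact (huniq a rfl).trans (huniq b hab).symm
  set E : S.X ⟶ S.X := S.comul ≫ v ▷ S.X ≫ S.mul with hEdef
  set p : 𝟙_ C ⟶ S.X := S.one ≫ E with hpdef
  have hmod : S.mul ≫ E = E ▷ S.X ≫ S.mul := mod S v
  have hrep : E = (λ_ S.X).inv ≫ p ▷ S.X ≫ S.mul := rep S hmod
  have hEN : E = (ρ_ S.X).inv ≫ S.X ◁ p ≫ S.mul := by
    rw [MN S hcomm p, ← hrep]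
  have hvE : E = v ≫ E := by
    have h := vconj S hv.1
    rw [← hEdef, ← hpdef, ← hEN] at h
    exact h
  obtain ⟨c, hc⟩ := hconn p
  -- trace computations
  have key1 : S.one ≫ S.comul ≫ E ▷ S.X ≫ S.mul ≫ S.counit = p ≫ S.counit := by
    calc S.one ≫ S.comul ≫ E ▷ S.X ≫ S.mul ≫ S.counit
        = S.one ≫ S.comul ≫ (E ▷ S.X ≫ S.mul) ≫ S.counit := by simp only [Category.assoc]
      _ = S.one ≫ (S.comul ≫ S.mul) ≫ E ≫ S.counit := by
          rw [← hmod]; simp only [Category.assoc]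
      _ = p ≫ S.counit := by
          rw [S.comul_mul]; simp only [Category.id_comp, hpdef, Category.assoc]
  have key2 : S.one ≫ S.comul ≫ (v ≫ E) ▷ S.X ≫ S.mul ≫ S.counit = (p ≫ E) ≫ S.counit := by
    calc S.one ≫ S.comul ≫ (v ≫ E) ▷ S.X ≫ S.mul ≫ S.counit
        = S.one ≫ S.comul ≫ v ▷ S.X ≫ (E ▷ S.X ≫ S.mul) ≫ S.counit := by
          simp only [comp_whiskerRight, Category.assoc]
      _ = S.one ≫ S.comul ≫ v ▷ S.X ≫ S.mul ≫ E ≫ S.counit := by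
          rw [← hmod]; simp only [Category.assoc]
      _ = (p ≫ E) ≫ S.counit := by simp only [hpdef, hEdef, Category.assoc]
  have heq : p ≫ S.counit = (p ≫ E) ≫ S.counit := by
    rw [← key1, ← key2, ← hvE]
  have hpε : p ≫ S.counit = (c * d) • 𝟙 (𝟙_ C) := by
    rw [hc, Linear.smul_comp, hd, smul_smul]
  have hpE : p ≫ E = c • p := by
    conv_lhs => rw [hc, Linear.smul_comp, ← hpdef]
  have hpEε : (p ≫ E) ≫ S.counit = (c * (c * d)) • 𝟙 (𝟙_ C) := by
    rw [hpE, Linear.smul_comp, hpε, smul_smul]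
  have hccd : c * d = c * (c * d) := cancel _ _ (by rw [← hpε, ← hpEε, heq])
  have hcc : c = c * c := mul_right_cancel₀ hd0 (by linear_combination hccd)
  by_cases hc1 : c = 1
  · -- then E = 𝟙 and v = 𝟙, contradiction
    exfalso
    apply hvne
    have hpone : p = S.one := by rw [hc, hc1, one_smul]
    have hEone : E = 𝟙 S.X := by
      rw [hrep, hpone, S.one_mul, Iso.inv_hom_id]
    rw [hEone] at hvE
    simpa using hvE.symm
  · have h0 : c * (c - 1) = 0 := by linear_combination -hcc
    have hc0 : c = 0 := by
      rcases mul_eq_zero.mp h0 with h | h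
      · exact h
      · exact absurd (sub_eq_zero.mp h) hc1
    have hp0 : p = 0 := by rw [hc, hc0, zero_smul]
    -- the "name" of E vanishes
    have hcomod : E ≫ S.comul = S.comul ≫ S.X ◁ E := by
      conv_lhs => rw [hEN]
      conv_rhs => rw [hEN]
      exact comodL S p
    have hhatE : (S.one ≫ S.comul) ≫ S.X ◁ E = 0 := by
      calc (S.one ≫ S.comul) ≫ S.X ◁ E = S.one ≫ (S.comul ≫ S.X ◁ E) := by
            simp only [Category.assoc]
        _ = (S.one ≫ E) ≫ S.comul := by rw [← hcomod]; simp only [Category.assoc]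
        _ = 0 := by rw [← hpdef, hp0]; simp
    have hhatw : (S.one ≫ S.comul) ≫ S.X ◁ (S.counit ≫ p) = 0 := by
      have hcr : S.comul ≫ S.X ◁ S.counit = (ρ_ S.X).inv := by
        rw [← cancel_mono (ρ_ S.X).hom]
        simpa [Category.assoc] using S.counit_right
      calc (S.one ≫ S.comul) ≫ S.X ◁ (S.counit ≫ p)
          = S.one ≫ (S.comul ≫ S.X ◁ S.counit) ≫ S.X ◁ p := by
            simp only [MonoidalCategory.whiskerLeft_comp, Category.assoc]
        _ = S.one ≫ (ρ_ S.X).inv ≫ S.X ◁ p := by rw [hcr]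
        _ = (ρ_ (𝟙_ C)).inv ≫ S.one ▷ (𝟙_ C) ≫ S.X ◁ p := by
            rw [rightUnitor_inv_naturality_assoc]
        _ = (ρ_ (𝟙_ C)).inv ≫ (𝟙_ C) ◁ p ≫ S.one ▷ S.X := by
            rw [← whisker_exchange S.one p]
        _ = 0 := by
            rw [MonoidalCategory.id_whiskerLeft, hp0]
            simp
    -- conclude via the reconstruction lemma
    calc E
        = (ρ_ S.X).inv ≫ S.X ◁ ((S.one ≫ S.comul) ≫ S.X ◁ E) ≫ (α_ S.X S.X S.X).inv ≫
            S.mul ▷ S.X ≫ S.counit ▷ S.X ≫ (λ_ S.X).hom := R2 S E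
      _ = (ρ_ S.X).inv ≫ S.X ◁ ((S.one ≫ S.comul) ≫ S.X ◁ (S.counit ≫ p)) ≫
            (α_ S.X S.X S.X).inv ≫ S.mul ▷ S.X ≫ S.counit ▷ S.X ≫ (λ_ S.X).hom := by
          rw [hhatE, hhatw]
      _ = S.counit ≫ p := (R2 S _).symm
      _ = 0 := by rw [hp0]; simp

end Main

end AutOrthAux

/-- The assignment `g ↦ χ_g`, `χ_g(x) = tr_A(g ∘ x) · d(A)⁻¹`, is injective
on algebra automorphisms of an étale algebra `A`, and distinct automorphisms are orthogonal
minimal idempotents of `Q(A)`: `g ∗ h = 0` for `g ≠ h`, while `g ∗ g = g`. -/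
theorem automorphisms_orthogonal_idempotents {k : Type*} [Field k]
    {C : Type u} [Category.{v} C] [MonoidalCategory C] [BraidedCategory C]
    [Preadditive C] [CategoryTheory.Linear k C]
    (S : SeparableAlgebra C)
    (hcommA : S.IsCommutative)
    (hconn : ∀ f : 𝟙_ C ⟶ S.X, ∃ c : k, f = c • S.one)
    (hsimple : ∀ u : 𝟙_ C ⟶ 𝟙_ C, ∃! c : k, u = c • 𝟙 (𝟙_ C))
    (d : k) (hd : S.trace (𝟙 S.X) = d • 𝟙 (𝟙_ C)) (hd0 : d ≠ 0)
    -- two algebra automorphisms `g`, `h`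
    (g h : S.X ⟶ S.X) (hg : S.IsAlgHom g) (hgiso : IsIso g)
    (hh : S.IsAlgHom h) (hhiso : IsIso h)
    -- their characters `χ_g`, `χ_h`
    (χg χh : (S.X ⟶ S.X) → k)
    (hχg : ∀ x : S.X ⟶ S.X, S.trace (x ≫ g) = (χg x * d) • 𝟙 (𝟙_ C))
    (hχh : ∀ x : S.X ⟶ S.X, S.trace (x ≫ h) = (χh x * d) • 𝟙 (𝟙_ C)) :
    -- distinct automorphisms have distinct characters …
    (g ≠ h → χg ≠ χh) ∧
    -- … and are orthogonal idempotents for the convolution product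
    (g ≠ h → S.conv g h = 0) ∧
    S.conv g g = g := by
  haveI := hgiso
  haveI := hhiso
  have cancel : ∀ a b : k, a • 𝟙 (𝟙_ C) = b • 𝟙 (𝟙_ C) → a = b := by
    intro a b hab
    obtain ⟨c0, -, huniq⟩ := hsimple (a • 𝟙 (𝟙_ C))
    exact (huniq a rfl).trans (huniq b hab).symm
  -- `trace 𝟙 = one ≫ counit`
  have htr1 : S.trace (𝟙 S.X) = S.one ≫ S.counit := by
    unfold SeparableAlgebra.trace
    rw [MonoidalCategory.id_whiskerRight, Category.id_comp]
    slice_lhs 2 3 => rw [S.comul_mul]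
    simp
  have hd' : S.one ≫ S.counit = d • 𝟙 (𝟙_ C) := by rw [← htr1]; exact hd
  -- inverses and compositions of algebra maps are algebra maps
  have inv_alg : ∀ (a : S.X ⟶ S.X) [IsIso a], S.IsAlgHom a → S.IsAlgHom (inv a) := by
    intro a ha hAlg
    constructor
    · have hstep : (inv a ⊗ₘ inv a) ≫ S.mul ≫ a = S.mul := by
        rw [hAlg.1, tensorHom_comp_tensorHom_assoc]
        simp
      calc S.mul ≫ inv a = ((inv a ⊗ₘ inv a) ≫ S.mul ≫ a) ≫ inv a := by rw [hstep]
        _ = (inv a ⊗ₘ inv a) ≫ S.mul := by simp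
    · calc S.one ≫ inv a = (S.one ≫ a) ≫ inv a := by rw [hAlg.2]
        _ = S.one := by simp
  have comp_alg : ∀ (a b : S.X ⟶ S.X), S.IsAlgHom a → S.IsAlgHom b → S.IsAlgHom (a ≫ b) := by
    intro a b hA hB
    constructor
    · calc S.mul ≫ a ≫ b = (S.mul ≫ a) ≫ b := by simp
        _ = (a ⊗ₘ a) ≫ (S.mul ≫ b) := by rw [hA.1]; simp
        _ = (a ⊗ₘ a) ≫ (b ⊗ₘ b) ≫ S.mul := by rw [hB.1]
        _ = ((a ≫ b) ⊗ₘ (a ≫ b)) ≫ S.mul := by rw [tensorHom_comp_tensorHom_assoc]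
    · calc S.one ≫ a ≫ b = (S.one ≫ a) ≫ b := by simp
        _ = S.one := by rw [hA.2, hB.2]
  refine ⟨?_, ?_, ?_⟩
  · -- distinct automorphisms have distinct characters
    intro hne heq
    have hwalg : S.IsAlgHom (inv g ≫ h) := comp_alg _ _ (inv_alg g hg) hh
    have hwne : inv g ≫ h ≠ 𝟙 S.X := by
      intro hcon
      have h2 : g ≫ inv g ≫ h = g ≫ 𝟙 S.X := by rw [hcon]
      have h3 : h = g := by simpa using h2
      exact hne h3.symm
    have hE0 := AutOrthAux.main S hcommA hconn hsimple d hd' hd0 _ hwalg hwne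
    have htrw : S.trace (inv g ≫ h) = 0 := by
      unfold SeparableAlgebra.trace
      calc S.one ≫ S.comul ≫ (inv g ≫ h) ▷ S.X ≫ S.mul ≫ S.counit
          = S.one ≫ (S.comul ≫ (inv g ≫ h) ▷ S.X ≫ S.mul) ≫ S.counit := by
            simp only [Category.assoc]
        _ = 0 := by rw [hE0]; simp
    have hχh0 : χh (inv g) = 0 := by
      have h1 := hχh (inv g)
      rw [htrw] at h1
      have h2 : χh (inv g) * d = 0 := by
        refine cancel _ _ ?_
        rw [← h1, zero_smul]
      rcases mul_eq_zero.mp h2 with h3 | h3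
      · exact h3
      · exact absurd h3 hd0
    have hχg1 : χg (inv g) = 1 := by
      have h1 := hχg (inv g)
      rw [IsIso.inv_hom_id, hd] at h1
      have h2 : d = χg (inv g) * d := cancel _ _ h1
      have h3 : (1 : k) * d = χg (inv g) * d := by rw [one_mul]; exact h2
      exact (mul_right_cancel₀ hd0 h3).symm
    rw [heq, hχh0] at hχg1
    exact one_ne_zero hχg1.symm
  · -- orthogonality
    intro hne
    have hvalg : S.IsAlgHom (g ≫ inv h) := comp_alg _ _ hg (inv_alg h hh)
    have hvne : g ≫ inv h ≠ 𝟙 S.X := by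
      intro hcon
      apply hne
      have h2 : (g ≫ inv h) ≫ h = 𝟙 S.X ≫ h := by rw [hcon]
      simpa using h2
    have hE0 := AutOrthAux.main S hcommA hconn hsimple d hd' hd0 _ hvalg hvne
    have hvh : (g ≫ inv h) ≫ h = g := by simp
    have hfac : S.conv g h = (S.comul ≫ (g ≫ inv h) ▷ S.X ≫ S.mul) ≫ h := by
      unfold SeparableAlgebra.conv
      calc S.comul ≫ (g ⊗ₘ h) ≫ S.mul
          = S.comul ≫ (g ▷ S.X ≫ S.X ◁ h) ≫ S.mul := by rw [MonoidalCategory.tensorHom_def]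
        _ = S.comul ≫ ((g ≫ inv h) ≫ h) ▷ S.X ≫ S.X ◁ h ≫ S.mul := by
            rw [hvh]; simp only [Category.assoc]
        _ = S.comul ≫ (g ≫ inv h) ▷ S.X ≫ h ▷ S.X ≫ S.X ◁ h ≫ S.mul := by
            rw [comp_whiskerRight]; simp only [Category.assoc]
        _ = S.comul ≫ (g ≫ inv h) ▷ S.X ≫ (h ⊗ₘ h) ≫ S.mul := by
            rw [MonoidalCategory.tensorHom_def h h]; simp only [Category.assoc]
        _ = S.comul ≫ (g ≫ inv h) ▷ S.X ≫ S.mul ≫ h := by rw [← hh.1]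
        _ = (S.comul ≫ (g ≫ inv h) ▷ S.X ≫ S.mul) ≫ h := by simp only [Category.assoc]
    rw [hfac, hE0]
    simp
  · -- idempotency
    unfold SeparableAlgebra.conv
    rw [← hg.1, ← Category.assoc, S.comul_mul, Category.id_comp]
end
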